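/- Let P be an elementary abelian 2-subgroup of a finite group G and D a subgroup of P with 1 < |D| < |P|. If every subgroup of P of order |D| is normal in G, then every minimal subgroup of P is contained in the center of G. -/

import Mathlib

/-- If `a * a = 1` then every integer power of `a` is `1` or `a`. -/
lemma aux_zpow_two {A : Type*} [Group A] {a : A} (ha : a * a = 1) (j : ℤ) :
    a ^ j = 1 ∨ a ^ j = a := by
  have h2 : a ^ (2 : ℤ) = 1 := by
    rw [show (2:ℤ) = 1 + 1 by ring, zpow_add, zpow_one, ha]
  have key : a ^ j = a ^ (j % 2) := by
    conv_lhs => rw [← Int.mul_ediv_add_emod j 2]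
    rw [zpow_add, zpow_mul, h2, one_zpow, one_mul]
  rcases Int.emod_two_eq j with h | h
  · left; rw [key, h, zpow_zero]
  · right; rw [key, h, zpow_one]

/-- A group in which every element squares to one is commutative. -/
lemma aux_comm {A : Type*} [Group A] (hsq : ∀ a : A, a * a = 1) (a b : A) :
    a * b = b * a := by
  have inv_eq : ∀ c : A, c⁻¹ = c := fun c => inv_eq_of_mul_eq_one_right (hsq c)
  calc a * b = (a * b)⁻¹ := (inv_eq _).symm
    _ = b⁻¹ * a⁻¹ := mul_inv_rev a b
    _ = b * a := by rw [inv_eq, inv_eq]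

/-- Membership in `M ⊔ ⟨y⟩` in an elementary abelian 2-group. -/
lemma aux_mem_sup {A : Type*} [Group A] (hsq : ∀ a : A, a * a = 1) (M : Subgroup A)
    (y w : A) (hw : w ∈ M ⊔ Subgroup.zpowers y) : w ∈ M ∨ ∃ m ∈ M, w = m * y := by
  have hcomm := aux_comm hsq
  let U : Subgroup A :=
    { carrier := {w | w ∈ M ∨ ∃ m ∈ M, w = m * y}
      one_mem' := Or.inl M.one_mem
      mul_mem' := by
        rintro a b (ha | ⟨m₁, hm₁, rfl⟩) (hb | ⟨m₂, hm₂, rfl⟩)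
        · exact Or.inl (M.mul_mem ha hb)
        · exact Or.inr ⟨a * m₂, M.mul_mem ha hm₂, (mul_assoc _ _ _).symm⟩
        · refine Or.inr ⟨m₁ * b, M.mul_mem hm₁ hb, ?_⟩
          rw [mul_assoc, mul_assoc, hcomm y b]
        · refine Or.inl ?_
          have heq : m₁ * y * (m₂ * y) = m₁ * m₂ := by
            calc m₁ * y * (m₂ * y) = m₁ * (y * (m₂ * y)) := mul_assoc _ _ _
              _ = m₁ * (m₂ * y * y) := by rw [hcomm y (m₂ * y)]
              _ = m₁ * (m₂ * (y * y)) := by rw [mul_assoc m₂ y y]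
              _ = m₁ * m₂ := by rw [hsq y, mul_one]
          rw [heq]
          exact M.mul_mem hm₁ hm₂
      inv_mem' := by
        intro a ha
        have hinv : a⁻¹ = a := inv_eq_of_mul_eq_one_right (hsq a)
        rwa [hinv] }
  have hMU : M ≤ U := fun m hm => Or.inl hm
  have hyU : Subgroup.zpowers y ≤ U := by
    rintro t ⟨j, rfl⟩
    show y ^ j ∈ U
    rcases aux_zpow_two (hsq y) j with h | h
    · rw [h]; exact U.one_mem
    · rw [h]; exact Or.inr ⟨1, M.one_mem, (one_mul y).symm⟩
  exact sup_le hMU hyU hw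

/-- In a finite elementary abelian 2-group, given two distinct nontrivial elements `x z`,
there is a subgroup of index at most two containing `x` but not `z`. -/
lemma aux_hyperplane {A : Type*} [Group A] [Finite A] (hsq : ∀ a : A, a * a = 1)
    {x z : A} (hx : x ≠ 1) (hz : z ≠ 1) (hzx : z ≠ x) :
    ∃ M : Subgroup A, x ∈ M ∧ z ∉ M ∧ Nat.card A ≤ 2 * Nat.card M := by
  classical
  haveI : Finite (Subgroup A) :=
    Finite.of_injective (fun M : Subgroup A => (M : Set A)) SetLike.coe_injective
  set S : Set (Subgroup A) := {M | x ∈ M ∧ z ∉ M} with hS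
  have hSne : S.Nonempty := by
    refine ⟨Subgroup.zpowers x, Subgroup.mem_zpowers x, ?_⟩
    rintro ⟨j, rfl⟩
    rcases aux_zpow_two (hsq x) j with h | h
    · exact hz h
    · exact hzx h
  obtain ⟨M, hMS, hMmax⟩ := Set.Finite.exists_maximalFor id S (Set.toFinite S) hSne
  obtain ⟨hxM, hzM⟩ := hMS
  refine ⟨M, hxM, hzM, ?_⟩
  have hcoset : ∀ y : A, y ∉ M → y⁻¹ * z ∈ M := by
    intro y hy
    have hzsup : z ∈ M ⊔ Subgroup.zpowers y := by
      by_contra hzs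
      have hSsup : (M ⊔ Subgroup.zpowers y) ∈ S :=
        ⟨Subgroup.mem_sup_left hxM, hzs⟩
      have heq : id M = id (M ⊔ Subgroup.zpowers y) :=
        le_antisymm (le_sup_left : M ≤ _) (hMmax hSsup le_sup_left)
      simp only [id] at heq
      apply hy
      have : y ∈ M ⊔ Subgroup.zpowers y := Subgroup.mem_sup_right (Subgroup.mem_zpowers y)
      rwa [← heq] at this
    rcases aux_mem_sup hsq M y z hzsup with hmem | ⟨m, hm, hzm⟩
    · exact absurd hmem hzM
    · have hinv : y⁻¹ = y := inv_eq_of_mul_eq_one_right (hsq y)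
      rw [hzm, hinv, aux_comm hsq m y, ← mul_assoc, hsq y, one_mul]
      exact hm
  have hsur : Function.Surjective
      (fun b : Bool => if b then ((z : A) : A ⧸ M) else ((1 : A) : A ⧸ M)) := by
    intro q
    induction q using QuotientGroup.induction_on with
    | H y =>
      by_cases hy : y ∈ M
      · refine ⟨false, ?_⟩
        simp only [if_false, Bool.false_eq_true]
        exact (QuotientGroup.eq (a := (1 : A)) (b := y)).mpr (by simpa using hy)
      · refine ⟨true, ?_⟩
        simp only [if_true]
        exact ((QuotientGroup.eq (s := M)).mpr (hcoset y hy)).symm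
  have hidx : M.index ≤ 2 := by
    have h1 := Nat.card_le_card_of_surjective _ hsur
    have h2 : Nat.card Bool = 2 := by simp [Nat.card_eq_fintype_card]
    rw [Subgroup.index]
    omega
  have hmul : Nat.card M * M.index = Nat.card A := Subgroup.card_mul_index M
  calc Nat.card A = Nat.card M * M.index := hmul.symm
    _ ≤ Nat.card M * 2 := Nat.mul_le_mul_left _ hidx
    _ = 2 * Nat.card M := Nat.mul_comm _ _

theorem stmt6 {G : Type*} [Group G] [Finite G] (P : Subgroup G)
    (hP2 : IsPGroup 2 P) (helem : ∀ x ∈ P, x * x = 1)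
    (D : Subgroup G) (hDP : D ≤ P) (hD1 : 1 < Nat.card D)
    (hDlt : Nat.card D < Nat.card P)
    (hnorm : ∀ H : Subgroup G, H ≤ P → Nat.card H = Nat.card D → H.Normal) :
    ∀ H : Subgroup G, H ≤ P → (Nat.card H).Prime → H ≤ Subgroup.center G := by
  have hfact : Fact (Nat.Prime 2) := ⟨Nat.prime_two⟩
  obtain ⟨n, hn⟩ := hP2.exists_card_eq
  have hDdvd : Nat.card D ∣ Nat.card P := by
    have h := Subgroup.card_subgroup_dvd_card (D.subgroupOf P)
    rwa [Nat.card_congr (Subgroup.subgroupOfEquivOfLe hDP).toEquiv] at h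
  obtain ⟨k, -, hk⟩ : ∃ k, k ≤ n ∧ Nat.card D = 2 ^ k := by
    rw [hn] at hDdvd
    exact (Nat.dvd_prime_pow Nat.prime_two).mp hDdvd
  have hk1 : 1 ≤ k := by
    by_contra h
    push_neg at h
    interval_cases k
    simp [hk] at hD1
  have hkn : k < n := by
    rw [hk, hn] at hDlt
    exact (Nat.pow_lt_pow_iff_right one_lt_two).mp hDlt
  have cardmap : ∀ (W : Subgroup G) (K : Subgroup ↥W),
      Nat.card (K.map W.subtype) = Nat.card K := fun W K =>
    Nat.card_congr (Subgroup.equivMapOfInjective K W.subtype W.subtype_injective).symm.toEquiv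
  -- Sub-lemma A
  have subA : ∀ W : Subgroup G, W ≤ P → Nat.card D ≤ Nat.card W →
      ∀ x ∈ W, ∃ K : Subgroup G, K ≤ W ∧ Nat.card K = Nat.card D ∧ x ∈ K := by
    intro W hWP hcard x hx
    have hsqW : ∀ w : ↥W, w * w = 1 := fun w => Subtype.ext (helem w (hWP w.2))
    have hPW : IsPGroup 2 ↥W := fun w => ⟨1, by
      rw [pow_one, sq]
      exact hsqW w⟩
    obtain ⟨m, hm⟩ := hPW.exists_card_eq
    have hkm : k ≤ m := by
      rw [hk, hm] at hcard
      exact (Nat.pow_le_pow_iff_right one_lt_two).mp hcard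
    have hdvd : 2 ^ k ∣ Nat.card ↥W := by
      rw [hm]; exact pow_dvd_pow 2 hkm
    set x' : ↥W := ⟨x, hx⟩ with hx'
    have hox : orderOf x' ∣ 2 := orderOf_dvd_of_pow_eq_one (by rw [sq]; exact hsqW x')
    have hox2 : orderOf x' ∣ 2 ^ 1 := by rwa [pow_one]
    obtain ⟨j, hj1, hje⟩ := (Nat.dvd_prime_pow Nat.prime_two).mp hox2
    obtain ⟨K', hK'card, hK'le⟩ :=
      Sylow.exists_subgroup_card_pow_prime_le 2 hdvd (Subgroup.zpowers x')
        (by rw [Nat.card_zpowers, hje]) (hj1.trans hk1)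
    refine ⟨K'.map W.subtype, Subgroup.map_subtype_le _, ?_, ?_⟩
    · rw [cardmap, hK'card, hk]
    · exact ⟨x', hK'le (Subgroup.mem_zpowers x'), rfl⟩
  -- Sub-lemma B
  have subB : ∀ x z : G, x ∈ P → z ∈ P → x ≠ 1 → z ≠ 1 → z ≠ x →
      ∃ M : Subgroup G, M ≤ P ∧ Nat.card D ≤ Nat.card M ∧ x ∈ M ∧ z ∉ M := by
    intro x z hxP hzP hx1 hz1 hzx
    have hsqP : ∀ a : ↥P, a * a = 1 := fun a => Subtype.ext (helem a a.2)
    obtain ⟨M', hxM', hzM', hcard⟩ := aux_hyperplane hsqP (x := ⟨x, hxP⟩) (z := ⟨z, hzP⟩)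
      (fun h => hx1 (congrArg Subtype.val h)) (fun h => hz1 (congrArg Subtype.val h))
      (fun h => hzx (congrArg Subtype.val h))
    refine ⟨M'.map P.subtype, Subgroup.map_subtype_le _, ?_, ⟨⟨x, hxP⟩, hxM', rfl⟩, ?_⟩
    · rw [cardmap, hk]
      have h1 : 2 ^ (k + 1) ≤ 2 ^ n := Nat.pow_le_pow_right (by norm_num) hkn
      rw [hn] at hcard
      have : 2 ^ (k + 1) = 2 * 2 ^ k := by ring
      omega
    · rintro ⟨⟨w, hwP⟩, hwM', hw⟩
      apply hzM'
      have : (⟨w, hwP⟩ : ↥P) = ⟨z, hzP⟩ := Subtype.ext hw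
      rwa [this] at hwM'
  -- Key: every element of P is central
  have key : ∀ x ∈ P, ∀ g : G, g * x * g⁻¹ = x := by
    intro x hxP g
    by_cases hx1 : x = 1
    · subst hx1; simp
    obtain ⟨K0, hK0P, hK0card, hxK0⟩ := subA P le_rfl hDlt.le x hxP
    have hK0norm := hnorm K0 hK0P hK0card
    have hzK0 : g * x * g⁻¹ ∈ K0 := hK0norm.conj_mem x hxK0 g
    have hzP : g * x * g⁻¹ ∈ P := hK0P hzK0
    set z := g * x * g⁻¹ with hzdef
    by_cases hzx : z = x
    · exact hzx
    exfalso
    have hz1 : z ≠ 1 := by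
      intro h
      apply hx1
      have hx' : x = g⁻¹ * z * g := by rw [hzdef]; group
      rw [hx', h]; group
    obtain ⟨M, hMP, hMcard, hxM, hzM⟩ := subB x z hxP hzP hx1 hz1 hzx
    obtain ⟨K, hKM, hKcard, hxK⟩ := subA M hMP hMcard x hxM
    have hKnorm := hnorm K (hKM.trans hMP) hKcard
    exact hzM (hKM (hKnorm.conj_mem x hxK g))
  intro H hHP _
  intro a ha
  rw [Subgroup.mem_center_iff]
  intro g
  have h := key a (hHP ha) g
  calc g * a = (g * a * g⁻¹) * g := by group
    _ = a * g := by rw [h]
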